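/- arXiv:2207.04561 — 2 statements merged into one kernel-verified Lean document; each statement's English description precedes it below -/
import Mathlib

section
/- Let T > 0 and let N ≥ 2 be an even integer. Let f : ℝ → ℂ be continuous, T-periodic, square-integrable on [0,T], and with absolutely summable Fourier coefficients. Then the interpolation error decomposes orthogonally: ‖f − I_N f‖² = ‖f − Π_N f‖² + ‖E_N f‖². -/
noncomputable section
open MeasureTheory Real Complex Filter

/-- Angular frequency `ω_k = 2πk/T`. -/
def angFreq (T : ℝ) (k : ℤ) : ℝ := 2 * π * k / T

/-- Equispaced nodes `x_{N,j} = Tj/N`. -/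
def node (T : ℝ) (N : ℕ) (j : ℕ) : ℝ := T * j / N

/-- Fourier coefficient `f̂_k = (1/T)∫_0^T f(x) e^{−iω_k x} dx`. -/
def fourierCoef (T : ℝ) (f : ℝ → ℂ) (k : ℤ) : ℂ :=
  (1 / T : ℂ) * ∫ x in (0:ℝ)..T, f x * Complex.exp (-Complex.I * (angFreq T k : ℂ) * (x : ℂ))

/-- Truncated Fourier series `(Π_N f)(x) = Σ_{|k| ≤ N/2} f̂_k e^{iω_k x}`. -/
def truncFourier (T : ℝ) (N : ℕ) (f : ℝ → ℂ) (x : ℝ) : ℂ :=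
  ∑ k ∈ Finset.Icc (-(N : ℤ) / 2) ((N : ℤ) / 2),
    fourierCoef T f k * Complex.exp (Complex.I * (angFreq T k : ℂ) * (x : ℂ))

/-- Discrete Fourier coefficient `f̃_k = (1/N)Σ_{j=0}^{N−1} f(x_{N,j}) e^{−iω_k x_{N,j}}`. -/
def dftCoef (T : ℝ) (N : ℕ) (f : ℝ → ℂ) (k : ℤ) : ℂ :=
  (1 / N : ℂ) * ∑ j ∈ Finset.range N,
    f (node T N j) * Complex.exp (-Complex.I * (angFreq T k : ℂ) * (node T N j : ℂ))

/-- Fourier interpolant `(I_N f)(x) = Σ_{k=−N/2}^{N/2−1} f̃_k e^{iω_k x}`. -/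
def fourierInterp (T : ℝ) (N : ℕ) (f : ℝ → ℂ) (x : ℝ) : ℂ :=
  ∑ k ∈ Finset.Icc (-(N : ℤ) / 2) ((N : ℤ) / 2 - 1),
    dftCoef T N f k * Complex.exp (Complex.I * (angFreq T k : ℂ) * (x : ℂ))

lemma exp_orth (T : ℝ) (hT : 0 < T) (m : ℤ) :
    ∫ x in (0:ℝ)..T, Complex.exp (Complex.I * (angFreq T m : ℂ) * (x : ℂ))
      = if m = 0 then (T:ℂ) else 0 := by
  rcases eq_or_ne m 0 with hm | hm
  · subst hm; simp [angFreq]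
  · rw [if_neg hm]
    have ha : (angFreq T m : ℝ) ≠ 0 := by
      simp only [angFreq]
      apply div_ne_zero _ hT.ne'
      exact mul_ne_zero (by positivity) (Int.cast_ne_zero.mpr hm)
    have hc : Complex.I * (angFreq T m : ℂ) ≠ 0 :=
      mul_ne_zero Complex.I_ne_zero (by exact_mod_cast Complex.ofReal_ne_zero.mpr ha)
    have h := integral_exp_mul_complex (a := 0) (b := T) hc
    simp only [mul_assoc] at h ⊢
    rw [h]
    have hT' : (T : ℂ) ≠ 0 := Complex.ofReal_ne_zero.mpr hT.ne'
    have : Complex.I * ((angFreq T m : ℂ) * (T : ℂ)) = (m : ℂ) * (2 * (π:ℂ) * Complex.I) := by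
      simp only [angFreq]
      push_cast
      field_simp
    rw [this, Complex.exp_int_mul_two_pi_mul_I]
    simp

lemma cont_exp (a : ℝ) (c : ℂ) : Continuous fun x : ℝ => Complex.exp (c * (a:ℂ) * (x:ℂ)) :=
  Complex.continuous_exp.comp (continuous_const.mul Complex.continuous_ofReal)

lemma cont_trunc (T : ℝ) (N : ℕ) (f : ℝ → ℂ) : Continuous (truncFourier T N f) :=
  continuous_finset_sum _ fun k _ => continuous_const.mul (cont_exp _ _)

set_option maxHeartbeats 1000000 in
lemma orth_coef (T : ℝ) (hT : 0 < T) (N : ℕ) (f : ℝ → ℂ) (hcont : Continuous f)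
    (k : ℤ) (hk : k ∈ Finset.Icc (-(N : ℤ) / 2) ((N : ℤ) / 2)) :
    ∫ x in (0:ℝ)..T,
      (f x - truncFourier T N f x) * Complex.exp (-Complex.I * (angFreq T k : ℂ) * (x : ℂ)) = 0 := by
  have hint1 : IntervalIntegrable
      (fun x : ℝ => f x * Complex.exp (-Complex.I * (angFreq T k : ℂ) * (x : ℂ)))
      volume 0 T := (hcont.mul (cont_exp _ _)).intervalIntegrable _ _
  have hint3 : IntervalIntegrable
      (fun x : ℝ => truncFourier T N f x * Complex.exp (-Complex.I * (angFreq T k : ℂ) * (x : ℂ)))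
      volume 0 T := ((cont_trunc T N f).mul (cont_exp _ _)).intervalIntegrable _ _
  have hsplit : (∫ x in (0:ℝ)..T,
      (f x - truncFourier T N f x) * Complex.exp (-Complex.I * (angFreq T k : ℂ) * (x : ℂ)))
      = (∫ x in (0:ℝ)..T, f x * Complex.exp (-Complex.I * (angFreq T k : ℂ) * (x : ℂ)))
        - ∫ x in (0:ℝ)..T, truncFourier T N f x
            * Complex.exp (-Complex.I * (angFreq T k : ℂ) * (x : ℂ)) := by
    rw [← intervalIntegral.integral_sub hint1 hint3]
    congr 1; ext x; ring
  have h1 : (∫ x in (0:ℝ)..T, f x * Complex.exp (-Complex.I * (angFreq T k : ℂ) * (x : ℂ)))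
      = (T : ℂ) * fourierCoef T f k := by
    rw [fourierCoef]
    have hT' : (T : ℂ) ≠ 0 := Complex.ofReal_ne_zero.mpr hT.ne'
    field_simp
  have h2 : (∫ x in (0:ℝ)..T, truncFourier T N f x
      * Complex.exp (-Complex.I * (angFreq T k : ℂ) * (x : ℂ)))
      = (T : ℂ) * fourierCoef T f k := by
    simp only [truncFourier, Finset.sum_mul]
    rw [intervalIntegral.integral_finset_sum (f := fun l x => fourierCoef T f l * Complex.exp (Complex.I * (angFreq T l : ℂ) * (x : ℂ))
        * Complex.exp (-Complex.I * (angFreq T k : ℂ) * (x : ℂ))) fun l _ =>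
      ((continuous_const.mul (cont_exp _ _)).mul (cont_exp _ _)).intervalIntegrable _ _]
    have key : ∀ l : ℤ, (∫ x in (0:ℝ)..T,
        fourierCoef T f l * Complex.exp (Complex.I * (angFreq T l : ℂ) * (x : ℂ))
          * Complex.exp (-Complex.I * (angFreq T k : ℂ) * (x : ℂ)))
        = fourierCoef T f l * (if l - k = 0 then (T:ℂ) else 0) := by
      intro l
      rw [← exp_orth T hT (l - k), ← intervalIntegral.integral_const_mul]
      congr 1; ext x
      rw [mul_assoc, ← Complex.exp_add]
      congr 2
      have : (angFreq T (l - k) : ℝ) = angFreq T l - angFreq T k := by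
        simp only [angFreq]; push_cast; ring
      rw [this]; push_cast; ring
    simp only [key]
    rw [Finset.sum_eq_single k]
    · simp [mul_comm]
    · intro l _ hlk; simp [sub_eq_zero, hlk]
    · intro h; exact absurd hk h
  rw [hsplit, h1, h2, sub_self]

set_option maxHeartbeats 1000000 in
lemma orth_poly (T : ℝ) (hT : 0 < T) (N : ℕ) (f : ℝ → ℂ) (hcont : Continuous f)
    (S : Finset ℤ) (hS : S ⊆ Finset.Icc (-(N : ℤ) / 2) ((N : ℤ) / 2)) (c : ℤ → ℂ) :
    ∫ x in (0:ℝ)..T, (f x - truncFourier T N f x) *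
      (starRingEnd ℂ) (∑ k ∈ S, c k * Complex.exp (Complex.I * (angFreq T k : ℂ) * (x : ℂ))) = 0 := by
  have hg : Continuous fun x => f x - truncFourier T N f x := hcont.sub (cont_trunc T N f)
  have step : (∫ x in (0:ℝ)..T, (f x - truncFourier T N f x) *
      (starRingEnd ℂ) (∑ k ∈ S, c k * Complex.exp (Complex.I * (angFreq T k : ℂ) * (x : ℂ))))
      = ∑ k ∈ S, ∫ x in (0:ℝ)..T, (starRingEnd ℂ) (c k) *
          ((f x - truncFourier T N f x) * Complex.exp (-Complex.I * (angFreq T k : ℂ) * (x : ℂ))) := by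
    rw [← intervalIntegral.integral_finset_sum (f := fun k x => (starRingEnd ℂ) (c k) *
        ((f x - truncFourier T N f x) * Complex.exp (-Complex.I * (angFreq T k : ℂ) * (x : ℂ)))) fun k _ =>
      (continuous_const.mul (hg.mul (cont_exp _ _))).intervalIntegrable _ _]
    congr 1; ext x
    rw [map_sum, Finset.mul_sum]
    refine Finset.sum_congr rfl fun k _ => ?_
    rw [map_mul, ← Complex.exp_conj]
    have : (starRingEnd ℂ) (Complex.I * (angFreq T k : ℂ) * (x : ℂ))
        = -Complex.I * (angFreq T k : ℂ) * (x : ℂ) := by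
      rw [map_mul, map_mul, Complex.conj_I, Complex.conj_ofReal, Complex.conj_ofReal]
    rw [this]; ring
  rw [step]
  refine Finset.sum_eq_zero fun k hk => ?_
  rw [intervalIntegral.integral_const_mul, orth_coef T hT N f hcont k (hS hk), mul_zero]

set_option maxHeartbeats 1000000 in
/-- **Orthogonal decomposition of the Fourier interpolation error**:
`‖f − I_N f‖² = ‖f − Π_N f‖² + ‖E_N f‖²` with `E_N f = I_N f − Π_N f`. -/
theorem interpolation_error_pythagoras
    (T : ℝ) (hT : 0 < T) (N : ℕ) (hN2 : 2 ≤ N) (hNe : Even N)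
    (f : ℝ → ℂ) (hcont : Continuous f) (hper : Function.Periodic f T)
    (hL2 : MemLp f 2 (volume.restrict (Set.Ioc 0 T)))
    (hsum : Summable fun k : ℤ => ‖fourierCoef T f k‖) :
    ∫ x in (0:ℝ)..T, ‖f x - fourierInterp T N f x‖ ^ 2
      = (∫ x in (0:ℝ)..T, ‖f x - truncFourier T N f x‖ ^ 2)
        + ∫ x in (0:ℝ)..T, ‖fourierInterp T N f x - truncFourier T N f x‖ ^ 2 := by
  have cI : Continuous (fourierInterp T N f) :=
    continuous_finset_sum _ fun k _ => continuous_const.mul (cont_exp _ _)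
  have cg : Continuous fun x => f x - truncFourier T N f x := hcont.sub (cont_trunc T N f)
  have ch : Continuous fun x => fourierInterp T N f x - truncFourier T N f x :=
    cI.sub (cont_trunc T N f)
  -- the complex orthogonality relation
  have horth : (∫ x in (0:ℝ)..T, (f x - truncFourier T N f x) *
      (starRingEnd ℂ) (fourierInterp T N f x - truncFourier T N f x)) = 0 := by
    have e1 : (∫ x in (0:ℝ)..T, (f x - truncFourier T N f x) *
        (starRingEnd ℂ) (fourierInterp T N f x)) = 0 := by
      have hsub : Finset.Icc (-(N : ℤ) / 2) ((N : ℤ) / 2 - 1)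
          ⊆ Finset.Icc (-(N : ℤ) / 2) ((N : ℤ) / 2) :=
        Finset.Icc_subset_Icc le_rfl (by omega)
      simpa only [fourierInterp] using
        orth_poly T hT N f hcont _ hsub (dftCoef T N f)
    have e2 : (∫ x in (0:ℝ)..T, (f x - truncFourier T N f x) *
        (starRingEnd ℂ) (truncFourier T N f x)) = 0 := by
      simpa only [truncFourier] using
        orth_poly T hT N f hcont _ (subset_refl _) (fourierCoef T f)
    have hsplit : (∫ x in (0:ℝ)..T, (f x - truncFourier T N f x) *
        (starRingEnd ℂ) (fourierInterp T N f x - truncFourier T N f x))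
        = (∫ x in (0:ℝ)..T, (f x - truncFourier T N f x) *
            (starRingEnd ℂ) (fourierInterp T N f x))
          - ∫ x in (0:ℝ)..T, (f x - truncFourier T N f x) *
              (starRingEnd ℂ) (truncFourier T N f x) := by
      have j1 : IntervalIntegrable (fun x => (f x - truncFourier T N f x) *
          (starRingEnd ℂ) (fourierInterp T N f x)) volume 0 T :=
        (cg.mul (continuous_star.comp cI)).intervalIntegrable _ _
      have j2 : IntervalIntegrable (fun x => (f x - truncFourier T N f x) *
          (starRingEnd ℂ) (truncFourier T N f x)) volume 0 T :=
        (cg.mul (continuous_star.comp (cont_trunc T N f))).intervalIntegrable _ _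
      rw [← intervalIntegral.integral_sub j1 j2]
      congr 1; ext x
      rw [map_sub, mul_sub]
    rw [hsplit, e1, e2, sub_zero]
  -- its real part
  have hre : (∫ x in (0:ℝ)..T, ((f x - truncFourier T N f x) *
      (starRingEnd ℂ) (fourierInterp T N f x - truncFourier T N f x)).re) = 0 := by
    have hi : IntervalIntegrable (fun x => (f x - truncFourier T N f x) *
        (starRingEnd ℂ) (fourierInterp T N f x - truncFourier T N f x)) volume 0 T :=
      (cg.mul (continuous_star.comp ch)).intervalIntegrable _ _
    have hcm := ContinuousLinearMap.intervalIntegral_comp_comm Complex.reCLM hi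
    simp only [Complex.reCLM_apply] at hcm
    rw [hcm, horth]
    simp
  -- pointwise Pythagoras expansion
  have hpt : ∀ x : ℝ, ‖f x - fourierInterp T N f x‖ ^ 2
      = ‖f x - truncFourier T N f x‖ ^ 2
        + ‖fourierInterp T N f x - truncFourier T N f x‖ ^ 2
        - 2 * ((f x - truncFourier T N f x) *
            (starRingEnd ℂ) (fourierInterp T N f x - truncFourier T N f x)).re := by
    intro x
    have hx : f x - fourierInterp T N f x
        = (f x - truncFourier T N f x) - (fourierInterp T N f x - truncFourier T N f x) := by
      ring
    rw [hx]
    simp only [Complex.sq_norm]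
    rw [Complex.normSq_sub]
  have i1 : IntervalIntegrable (fun x => ‖f x - truncFourier T N f x‖ ^ 2) volume 0 T :=
    (cg.norm.pow 2).intervalIntegrable _ _
  have i2 : IntervalIntegrable
      (fun x => ‖fourierInterp T N f x - truncFourier T N f x‖ ^ 2) volume 0 T :=
    (ch.norm.pow 2).intervalIntegrable _ _
  have i3 : IntervalIntegrable (fun x => 2 * ((f x - truncFourier T N f x) *
      (starRingEnd ℂ) (fourierInterp T N f x - truncFourier T N f x)).re) volume 0 T :=
    (continuous_const.mul (Complex.continuous_re.comp
      (cg.mul (continuous_star.comp ch)))).intervalIntegrable _ _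
  calc ∫ x in (0:ℝ)..T, ‖f x - fourierInterp T N f x‖ ^ 2
      = ∫ x in (0:ℝ)..T, (‖f x - truncFourier T N f x‖ ^ 2
          + ‖fourierInterp T N f x - truncFourier T N f x‖ ^ 2
          - 2 * ((f x - truncFourier T N f x) *
              (starRingEnd ℂ) (fourierInterp T N f x - truncFourier T N f x)).re) :=
        intervalIntegral.integral_congr fun x _ => hpt x
    _ = ((∫ x in (0:ℝ)..T, ‖f x - truncFourier T N f x‖ ^ 2)
          + ∫ x in (0:ℝ)..T, ‖fourierInterp T N f x - truncFourier T N f x‖ ^ 2)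
          - 2 * ∫ x in (0:ℝ)..T, ((f x - truncFourier T N f x) *
              (starRingEnd ℂ) (fourierInterp T N f x - truncFourier T N f x)).re := by
        rw [intervalIntegral.integral_sub (i1.add i2) i3,
          intervalIntegral.integral_add i1 i2, intervalIntegral.integral_const_mul]
    _ = _ := by rw [hre]; ring
end
end

section
/- Let N ≥ 2 be an even integer and let m ≥ 2 be an integer. Then Σ_{k=−N/2}^{N/2−1} Σ_{p ∈ ℤ, p ≠ 0} |k + pN|^{−2m} ≤ (N·ζ(2m) + 1) · (N/2)^{−2m}, where ζ is the Riemann zeta function. (Note that k + pN ≠ 0 for every k with −N/2 ≤ k ≤ N/2 − 1 and every nonzero integer p.) -/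
noncomputable section
open Real

/-- The Riemann zeta value `ζ(t) = Σ_{n ≥ 1} n^{−t}` for a natural exponent `t`. -/
def zetaNat (t : ℕ) : ℝ := ∑' n : ℕ, 1 / ((n : ℝ) + 1) ^ t

open ENNReal in
/-- auxiliary: the `n`-th term as an extended nonneg real -/
def uE (t n : ℕ) : ℝ≥0∞ := 1 / (n : ℝ≥0∞) ^ t

open ENNReal

lemma uE_ne_top {t n : ℕ} (hn : 1 ≤ n) : uE t n ≠ ⊤ := by
  have h1 : ((n : ℝ≥0∞)) ^ t ≠ 0 := pow_ne_zero t (Nat.cast_ne_zero.mpr (by omega))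
  simp [uE, ENNReal.div_eq_top, h1]

lemma uE_toReal {t n : ℕ} : (uE t n).toReal = 1 / (n : ℝ) ^ t := by
  rw [uE, ENNReal.toReal_div, ENNReal.toReal_pow, ENNReal.toReal_natCast, ENNReal.toReal_one]

/-- block reindexing: summing over blocks of length `N` -/
lemma block_sum (u : ℕ → ℝ≥0∞) (c N : ℕ) (hN : 1 ≤ N) :
    ∑ r ∈ Finset.range N, ∑' p : ℕ, u (c + (p * N + r)) = ∑' i : ℕ, u (c + i) := by
  haveI : NeZero N := ⟨by omega⟩
  calc ∑ r ∈ Finset.range N, ∑' p : ℕ, u (c + (p * N + r))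
      = ∑' p : ℕ, ∑ r ∈ Finset.range N, u (c + (p * N + r)) :=
        (Summable.tsum_finsetSum (fun _ _ => ENNReal.summable)).symm
    _ = ∑' p : ℕ, ∑' r : Fin N, u (c + (p * N + r)) := by
        refine tsum_congr fun p => ?_
        rw [tsum_fintype, Fin.sum_univ_eq_sum_range (fun r => u (c + (p * N + r))) N]
    _ = ∑' pr : ℕ × Fin N, u (c + (pr.1 * N + pr.2)) :=
        (Summable.tsum_prod' (f := fun pr : ℕ × Fin N => u (c + (pr.1 * N + pr.2)))
          ENNReal.summable fun _ => ENNReal.summable).symm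
    _ = ∑' i : ℕ, u (c + i) := by
        simpa using Equiv.tsum_eq (Nat.divModEquiv N).symm (fun i => u (c + i))

/-- splitting a sum over nonzero integers -/
lemma split_nonzero (g : ℤ → ℝ≥0∞) :
    ∑' p : {p : ℤ // p ≠ 0}, g p
      = (∑' n : ℕ, g ((n : ℤ) + 1)) + ∑' n : ℕ, g (-((n : ℤ) + 1)) := by
  have h : ∑' p : {p : ℤ // p ≠ 0}, g p = ∑' p : ℤ, ({p : ℤ | p ≠ 0}).indicator g p :=
    tsum_subtype {p : ℤ | p ≠ 0} g
  rw [h, tsum_of_add_one_of_neg_add_one ENNReal.summable ENNReal.summable]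
  have h0 : ({p : ℤ | p ≠ 0}).indicator g 0 = 0 := by simp
  have h1 : ∀ n : ℕ, ({p : ℤ | p ≠ 0}).indicator g ((n : ℤ) + 1) = g ((n : ℤ) + 1) := by
    intro n; apply Set.indicator_of_mem; simp; omega
  have h2 : ∀ n : ℕ, ({p : ℤ | p ≠ 0}).indicator g (-((n : ℤ) + 1)) = g (-((n : ℤ) + 1)) := by
    intro n; apply Set.indicator_of_mem; simp; omega
  rw [h0, add_zero, tsum_congr h1, tsum_congr h2]

lemma zeta_ofReal (t : ℕ) (ht : 2 ≤ t) :
    ∑' n : ℕ, (1 : ℝ≥0∞) / ((n : ℝ≥0∞) + 1) ^ t = ENNReal.ofReal (zetaNat t) := by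
  have hsum : Summable (fun n : ℕ => 1 / ((n : ℝ) + 1) ^ t) := by
    have h := (summable_nat_add_iff (f := fun n : ℕ => 1 / (n : ℝ) ^ t) 1).mpr
      (Real.summable_one_div_nat_pow.mpr (by omega))
    exact h.congr (by intro n; push_cast; ring_nf)
  rw [zetaNat, ENNReal.ofReal_tsum_of_nonneg (fun n => by positivity) hsum]
  refine tsum_congr fun n => ?_
  rw [ENNReal.ofReal_div_of_pos (by positivity), ENNReal.ofReal_one,
    ENNReal.ofReal_pow (by positivity),
    ENNReal.ofReal_add (by positivity) zero_le_one, ENNReal.ofReal_one, ENNReal.ofReal_natCast]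

/-- tail bound -/
lemma tail_bound (t M : ℕ) (hM : 1 ≤ M) :
    ∑' i : ℕ, uE t (M + 1 + i)
      ≤ (M : ℝ≥0∞) * (∑' q : ℕ, (1 : ℝ≥0∞) / ((q : ℝ≥0∞) + 1) ^ t) * uE t M := by
  haveI : NeZero M := ⟨by omega⟩
  have hre := Equiv.tsum_eq (Nat.divModEquiv M).symm (fun i : ℕ => uE t (M + 1 + i))
  rw [← hre]
  have step : ∀ qs : ℕ × Fin M,
      uE t (M + 1 + ((Nat.divModEquiv M).symm qs))
        ≤ (1 / ((qs.1 : ℝ≥0∞) + 1) ^ t) * uE t M := by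
    rintro ⟨q, s⟩
    have hle : ((q + 1) * M : ℕ) ≤ M + 1 + (q * M + (s : ℕ)) := by
      have h : (q + 1) * M = q * M + M := by ring
      rw [h]; linarith [Nat.zero_le (s : ℕ)]
    have hcast : (((q + 1) * M : ℕ) : ℝ≥0∞) = ((q : ℝ≥0∞) + 1) * (M : ℝ≥0∞) := by
      push_cast; ring
    calc uE t (M + 1 + ((Nat.divModEquiv M).symm (q, s)))
        ≤ 1 / (((q + 1) * M : ℕ) : ℝ≥0∞) ^ t := by
          apply ENNReal.div_le_div_left
          exact pow_le_pow_left₀ zero_le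
            (by exact_mod_cast Nat.cast_le.mpr (by exact hle)) t
      _ = (1 / ((q : ℝ≥0∞) + 1) ^ t) * uE t M := by
          rw [uE, hcast, mul_pow, one_div, one_div, one_div,
            ENNReal.mul_inv (Or.inl (pow_ne_zero t (by simp))) (Or.inl (by simp))]
  calc ∑' qs : ℕ × Fin M, uE t (M + 1 + ((Nat.divModEquiv M).symm qs))
      ≤ ∑' qs : ℕ × Fin M, (1 / ((qs.1 : ℝ≥0∞) + 1) ^ t) * uE t M :=
        ENNReal.tsum_le_tsum step
    _ = ∑' q : ℕ, ∑' s : Fin M, (1 / ((q : ℝ≥0∞) + 1) ^ t) * uE t M :=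
        Summable.tsum_prod' ENNReal.summable fun _ => ENNReal.summable
    _ = ∑' q : ℕ, (M : ℝ≥0∞) * ((1 / ((q : ℝ≥0∞) + 1) ^ t) * uE t M) := by
        refine tsum_congr fun q => ?_
        rw [tsum_fintype, Finset.sum_const, Finset.card_univ, Fintype.card_fin, nsmul_eq_mul]
    _ = (M : ℝ≥0∞) * (∑' q : ℕ, (1 : ℝ≥0∞) / ((q : ℝ≥0∞) + 1) ^ t) * uE t M := by
        rw [ENNReal.tsum_mul_left, ENNReal.tsum_mul_right, mul_assoc]

/-- **Counting lemma for the aliasing error**: for even `N ≥ 2` and `m ≥ 2`,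
`Σ_{k=−N/2}^{N/2−1} Σ_{p ≠ 0} |k + pN|^{−2m} ≤ (N·ζ(2m) + 1)·(N/2)^{−2m}`. -/
theorem aliasing_counting_lemma
    (N : ℕ) (hN2 : 2 ≤ N) (hNe : Even N) (m : ℕ) (hm : 2 ≤ m) :
    ∑ k ∈ Finset.Icc (-(N : ℤ) / 2) ((N : ℤ) / 2 - 1),
        ∑' p : {p : ℤ // p ≠ 0}, (1 : ℝ) / (|k + (p : ℤ) * N| : ℝ) ^ (2 * m)
      ≤ ((N : ℝ) * zetaNat (2 * m) + 1) * ((N : ℝ) / 2) ^ (-(2 * (m : ℤ))) := by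
  obtain ⟨M, hMN⟩ := hNe
  have hM1 : 1 ≤ M := by omega
  have hNM : (N : ℤ) = 2 * M := by push_cast [hMN]; ring
  have hb1 : -(N : ℤ) / 2 = -(M : ℤ) := by omega
  have hb2 : (N : ℤ) / 2 - 1 = (M : ℤ) - 1 := by omega
  set t := 2 * m with htdef
  set Z : ℝ≥0∞ := ∑' q : ℕ, (1 : ℝ≥0∞) / ((q : ℝ≥0∞) + 1) ^ t with hZ
  set T : ℤ → ℝ≥0∞ := fun k =>
    ∑' p : {p : ℤ // p ≠ 0}, uE t ((k + (p : ℤ) * N).natAbs) with hT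
  -- the key ENNReal bound
  have hmap : ∑ k ∈ Finset.Icc (-(M : ℤ)) ((M : ℤ) - 1), T k
      = ∑ r ∈ Finset.range (2 * M), T ((r : ℤ) - M) := by
    have hIcc : Finset.Icc (-(M : ℤ)) ((M : ℤ) - 1)
        = (Finset.range (2 * M)).map ⟨fun r : ℕ => (r : ℤ) - M, fun a b h => by simp only at h; omega⟩ := by
      ext x
      simp only [Finset.mem_Icc, Finset.mem_map, Finset.mem_range, Function.Embedding.coeFn_mk]
      constructor
      · intro hx; exact ⟨(x + M).toNat, by omega, by show ((x + M).toNat : ℤ) - M = x; omega⟩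
      · rintro ⟨a, ha, rfl⟩; show -(M : ℤ) ≤ (a : ℤ) - M ∧ (a : ℤ) - M ≤ M - 1; omega
    rw [hIcc, Finset.sum_map]; rfl
  have hsplit : ∀ r ∈ Finset.range (2 * M),
      T ((r : ℤ) - M)
        = (∑' p : ℕ, uE t (M + (p * (2 * M) + r)))
          + ∑' p : ℕ, uE t ((M + 1) + (p * (2 * M) + (2 * M - 1 - r))) := by
    intro r hr
    rw [Finset.mem_range] at hr
    refine (split_nonzero (fun p : ℤ => uE t (((r : ℤ) - M + p * N).natAbs))).trans ?_
    congr 1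
    · refine tsum_congr fun p => congrArg (uE t) ?_
      rw [hNM, show ((p : ℤ) + 1) * (2 * (M : ℤ)) = ((p * (2 * M) : ℕ) : ℤ) + 2 * M by
        push_cast; ring]
      omega
    · refine tsum_congr fun p => congrArg (uE t) ?_
      rw [hNM, show (-((p : ℤ) + 1)) * (2 * (M : ℤ)) = -((p * (2 * M) : ℕ) : ℤ) - 2 * M by
        push_cast; ring]
      omega
  have hbound : ∑ k ∈ Finset.Icc (-(M : ℤ)) ((M : ℤ) - 1), T k
      ≤ (2 * (M : ℝ≥0∞) * Z + 1) * uE t M := by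
    rw [hmap, Finset.sum_congr rfl hsplit, Finset.sum_add_distrib]
    have hA : ∑ r ∈ Finset.range (2 * M), ∑' p : ℕ, uE t (M + (p * (2 * M) + r))
        = ∑' i : ℕ, uE t (M + i) := block_sum (uE t) M (2 * M) (by omega)
    have hBr : ∑ r ∈ Finset.range (2 * M),
        ∑' p : ℕ, uE t ((M + 1) + (p * (2 * M) + (2 * M - 1 - r)))
        = ∑' i : ℕ, uE t ((M + 1) + i) := by
      rw [Finset.sum_range_reflect
        (fun r => ∑' p : ℕ, uE t ((M + 1) + (p * (2 * M) + r))) (2 * M)]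
      exact block_sum (uE t) (M + 1) (2 * M) (by omega)
    rw [hA, hBr]
    have hzero : ∑' i : ℕ, uE t (M + i) = uE t M + ∑' i : ℕ, uE t ((M + 1) + i) := by
      rw [tsum_eq_zero_add' ENNReal.summable]
      congr 1
      · exact tsum_congr fun i => congrArg (uE t) (show M + (i + 1) = M + 1 + i by omega)
    rw [hzero]
    have htail := tail_bound t M hM1
    calc uE t M + ∑' i : ℕ, uE t ((M + 1) + i) + ∑' i : ℕ, uE t ((M + 1) + i)
        ≤ uE t M + (M : ℝ≥0∞) * Z * uE t M + (M : ℝ≥0∞) * Z * uE t M :=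
          add_le_add (add_le_add le_rfl htail) htail
      _ = (2 * (M : ℝ≥0∞) * Z + 1) * uE t M := by ring
  -- finiteness
  have hZfin : Z ≠ ⊤ := by rw [hZ, zeta_ofReal t (by omega)]; exact ENNReal.ofReal_ne_top
  have hBfin : (2 * (M : ℝ≥0∞) * Z + 1) * uE t M ≠ ⊤ := by
    apply ENNReal.mul_ne_top
    · exact ENNReal.add_ne_top.mpr ⟨ENNReal.mul_ne_top
        (ENNReal.mul_ne_top (by simp) (by simp)) hZfin, by simp⟩
    · exact uE_ne_top hM1
  have hTfin : ∀ k ∈ Finset.Icc (-(M : ℤ)) ((M : ℤ) - 1), T k ≠ ⊤ := by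
    intro k hk
    refine ne_top_of_le_ne_top hBfin (le_trans ?_ hbound)
    exact Finset.single_le_sum (fun i _ => zero_le) hk
  -- rewrite the real LHS
  have hterm_ne : ∀ k ∈ Finset.Icc (-(M : ℤ)) ((M : ℤ) - 1), ∀ p : {p : ℤ // p ≠ 0},
      1 ≤ (k + (p : ℤ) * N).natAbs := by
    rintro k hk ⟨p, hp⟩
    rw [Finset.mem_Icc] at hk
    rw [hNM]
    rcases lt_or_gt_of_ne hp with h | h
    · have h3 : p * (2 * (M : ℤ)) ≤ (-1) * (2 * M) :=
        mul_le_mul_of_nonneg_right (by omega) (by positivity)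
      obtain ⟨q, hq⟩ : ∃ q, p * (2 * (M : ℤ)) = q := ⟨_, rfl⟩
      rw [hq] at h3 ⊢; omega
    · have h3 : (1 : ℤ) * (2 * M) ≤ p * (2 * (M : ℤ)) :=
        mul_le_mul_of_nonneg_right (by omega) (by positivity)
      obtain ⟨q, hq⟩ : ∃ q, p * (2 * (M : ℤ)) = q := ⟨_, rfl⟩
      rw [hq] at h3 ⊢; omega
  have hLHS : ∑ k ∈ Finset.Icc (-(M : ℤ)) ((M : ℤ) - 1),
      ∑' p : {p : ℤ // p ≠ 0}, (1 : ℝ) / (|k + (p : ℤ) * N| : ℝ) ^ t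
      = (∑ k ∈ Finset.Icc (-(M : ℤ)) ((M : ℤ) - 1), T k).toReal := by
    rw [ENNReal.toReal_sum hTfin]
    refine Finset.sum_congr rfl fun k hk => ?_
    rw [hT, ENNReal.tsum_toReal_eq (fun p => uE_ne_top (hterm_ne k hk p))]
    refine tsum_congr fun p => ?_
    rw [uE_toReal, Nat.cast_natAbs]
    push_cast
    ring
  rw [hb1, hb2, hLHS]
  -- compute the real RHS
  have hNR : (N : ℝ) = 2 * M := by exact_mod_cast hNM
  have hzeta_nonneg : 0 ≤ zetaNat t := by
    rw [zetaNat]; exact tsum_nonneg fun n => by positivity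
  have hRHS : ((N : ℝ) * zetaNat t + 1) * ((N : ℝ) / 2) ^ (-(2 * (m : ℤ)))
      = ((2 * (M : ℝ≥0∞) * Z + 1) * uE t M).toReal := by
    rw [ENNReal.toReal_mul, uE_toReal,
      ENNReal.toReal_add (ENNReal.mul_ne_top (ENNReal.mul_ne_top (by simp) (by simp)) hZfin)
        (by simp), ENNReal.toReal_mul, ENNReal.toReal_mul, ENNReal.toReal_ofNat,
      ENNReal.toReal_natCast, ENNReal.toReal_one]
    have hZval : Z.toReal = zetaNat t := by
      rw [hZ, zeta_ofReal t (by omega), ENNReal.toReal_ofReal hzeta_nonneg]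
    rw [hZval, hNR]
    have hhalf : (2 * (M : ℝ)) / 2 = (M : ℝ) := by ring
    rw [hhalf]
    have hzp : ((M : ℝ)) ^ (-(2 * (m : ℤ))) = 1 / (M : ℝ) ^ t := by
      rw [show (-(2 * (m : ℤ))) = -((t : ℕ) : ℤ) by rw [htdef]; push_cast; ring,
        zpow_neg, zpow_natCast, one_div]
    rw [hzp]
  rw [hRHS]
  exact ENNReal.toReal_mono hBfin hbound
end
end
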